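/- For all real d, s, θ, and all sequences u ∈ V_{d-θ+s}, v ∈ V_{d-θ-s}, w ∈ w^{1+2θ,∞}, the bilinear pairing satisfies |⟨A^d B(u,v), w⟩_{1+2θ}| ≤ C_{d,s,θ} ‖w‖_{w^{1+2θ,∞}} |A^{(d-θ+s)/2} u| |A^{(d-θ-s)/2} v|, where C_{d,s,θ} = |a|(λ^{1-3d+3θ+s} + λ^{-(1-3d+3θ+s)}) + |b|(λ^{2s} + λ^{-(1-3d+3θ-s)}). -/
import Mathlib


open Complex

/-- Wavenumbers of the sabra shell model: `k n = k0 * λ^n`. -/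
noncomputable def kk (k0 lam : ℝ) (n : ℤ) : ℝ := k0 * lam ^ n

/-- The sabra bilinear operator `B(u,v)`. -/
noncomputable def sB2 (a b k0 lam : ℝ) (u v : ℤ → ℂ) (n : ℤ) : ℂ :=
  -Complex.I * ((a : ℂ) * (kk k0 lam (n + 1) : ℝ) * v (n + 2) * (starRingEnd ℂ) (u (n + 1))
    + (b : ℂ) * (kk k0 lam n : ℝ) * v (n + 1) * (starRingEnd ℂ) (u (n - 1))
    + (a : ℂ) * (kk k0 lam (n - 1) : ℝ) * u (n - 1) * v (n - 2)
    + (b : ℂ) * (kk k0 lam (n - 1) : ℝ) * v (n - 1) * u (n - 2))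

/-- `AH k0 lam r u = |A^{r/2} u| = (∑ k_n^{2r} |u_n|²)^{1/2}`, the `V_r` norm. -/
noncomputable def AH (k0 lam r : ℝ) (u : ℤ → ℂ) : ℝ :=
  Real.sqrt (∑' n : ℕ, (kk k0 lam ((n : ℤ) + 1)) ^ (2 * r) * ‖u ((n : ℤ) + 1)‖ ^ 2)

/-- `Wsup k0 lam m w = ‖w‖_{w^{m,∞}} = sup_n k_n^m |w_n|`. -/
noncomputable def Wsup (k0 lam m : ℝ) (w : ℤ → ℂ) : ℝ :=
  ⨆ n : ℕ, (kk k0 lam ((n : ℤ) + 1)) ^ m * ‖w ((n : ℤ) + 1)‖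

/-- the bilinear estimate
`|⟨A^d B(u,v), w⟩_{1+2θ}| ≤ C_{d,s,θ} ‖w‖_{w^{1+2θ,∞}} |A^{(d-θ+s)/2} u| |A^{(d-θ-s)/2} v|`. -/
private lemma kk_pos {k0 lam : ℝ} (hk0 : 0 < k0) (hlam : 0 < lam) (m : ℤ) :
    0 < kk k0 lam m := mul_pos hk0 (zpow_pos hlam m)

private lemma kk_rpow_exp {k0 lam : ℝ} (hk0 : 0 < k0) (hlam : 0 < lam) (m : ℤ) (x : ℝ) :
    (kk k0 lam m) ^ x = Real.exp (x * Real.log k0 + ((m : ℝ) * x) * Real.log lam) := by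
  rw [Real.rpow_def_of_pos (kk_pos hk0 hlam m), kk,
    Real.log_mul hk0.ne' (zpow_pos hlam m).ne', Real.log_zpow]
  ring_nf

private lemma kk_ident {k0 lam : ℝ} (hk0 : 0 < k0) (hlam : 0 < lam)
    (m p q r : ℤ) (x y zx zy e : ℝ)
    (h1 : x + 1 + y = zx + zy)
    (h2 : (m:ℝ) * x + (p:ℝ) + (m:ℝ) * y = e + (q:ℝ) * zx + (r:ℝ) * zy) :
    (kk k0 lam m) ^ x * kk k0 lam p * (kk k0 lam m) ^ y
      = lam ^ e * ((kk k0 lam q) ^ zx * (kk k0 lam r) ^ zy) := by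
  have hp : kk k0 lam p = (kk k0 lam p) ^ (1:ℝ) := (Real.rpow_one _).symm
  have hle : lam ^ e = Real.exp (e * Real.log lam) := by rw [Real.rpow_def_of_pos hlam e, mul_comm]
  rw [hp, kk_rpow_exp hk0 hlam, kk_rpow_exp hk0 hlam, kk_rpow_exp hk0 hlam,
    kk_rpow_exp hk0 hlam, kk_rpow_exp hk0 hlam, hle, ← Real.exp_add, ← Real.exp_add,
    ← Real.exp_add, ← Real.exp_add]
  congr 1
  linear_combination Real.log k0 * h1 + Real.log lam * h2

private lemma cs_aux {f g : ℕ → ℝ} {Sf Sg : ℝ}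
    (hf : ∀ n, 0 ≤ f n) (hg : ∀ n, 0 ≤ g n) (hSf : 0 ≤ Sf) (hSg : 0 ≤ Sg)
    (hfb : ∀ N, ∑ n ∈ Finset.range N, f n ^ 2 ≤ Sf ^ 2)
    (hgb : ∀ N, ∑ n ∈ Finset.range N, g n ^ 2 ≤ Sg ^ 2) :
    Summable (fun n => f n * g n) ∧ ∑' n, f n * g n ≤ Sf * Sg := by
  have key : ∀ N, ∑ n ∈ Finset.range N, f n * g n ≤ Sf * Sg := by
    intro N
    have h := Finset.sum_mul_sq_le_sq_mul_sq (Finset.range N) f g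
    have h2 : (∑ n ∈ Finset.range N, f n * g n) ^ 2 ≤ (Sf * Sg) ^ 2 := by
      calc (∑ n ∈ Finset.range N, f n * g n) ^ 2
          ≤ (∑ n ∈ Finset.range N, f n ^ 2) * ∑ n ∈ Finset.range N, g n ^ 2 := h
        _ ≤ Sf ^ 2 * Sg ^ 2 :=
            mul_le_mul (hfb N) (hgb N) (Finset.sum_nonneg fun i _ => sq_nonneg _) (sq_nonneg _)
        _ = (Sf * Sg) ^ 2 := by ring
    have hnn : 0 ≤ ∑ n ∈ Finset.range N, f n * g n :=
      Finset.sum_nonneg fun i _ => mul_nonneg (hf i) (hg i)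
    nlinarith [mul_nonneg hSf hSg]
  have hs := summable_of_sum_range_le (fun n => mul_nonneg (hf n) (hg n)) key
  exact ⟨hs, Summable.tsum_le_of_sum_range_le hs key⟩

private lemma range_sq_le {f F : ℕ → ℝ} {c : ℝ} (hc : 0 ≤ c)
    (hF : ∀ N, ∑ n ∈ Finset.range N, F n ^ 2 ≤ c)
    (h0 : f 0 = 0) (hs : ∀ n, f (n + 1) = F n) :
    ∀ N, ∑ n ∈ Finset.range N, f n ^ 2 ≤ c := by
  intro N
  cases N with
  | zero => simpa using hc
  | succ M =>
    rw [Finset.sum_range_succ' (fun i => f i ^ 2) M]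
    simp only [hs, h0]
    simpa using hF M

private lemma range_sq_le_shift {f F : ℕ → ℝ} {c : ℝ}
    (hF : ∀ N, ∑ n ∈ Finset.range N, F n ^ 2 ≤ c)
    (hs : ∀ n, f n = F (n + 1)) :
    ∀ N, ∑ n ∈ Finset.range N, f n ^ 2 ≤ c := by
  intro N
  have h := Finset.sum_range_succ' (fun i => F i ^ 2) N
  have h2 := hF (N + 1)
  rw [h] at h2
  calc ∑ n ∈ Finset.range N, f n ^ 2 = ∑ n ∈ Finset.range N, F (n+1) ^ 2 := by simp [hs]
    _ ≤ c := by nlinarith [sq_nonneg (F 0)]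


theorem sabra_bilinear_pairing_estimate
    (a b k0 lam : ℝ) (hk0 : 0 < k0) (hlam : 1 < lam)
    (d s θ : ℝ) (u v w : ℤ → ℂ)
    (hu0 : ∀ n : ℤ, n ≤ 0 → u n = 0) (hv0 : ∀ n : ℤ, n ≤ 0 → v n = 0)
    (hw0 : ∀ n : ℤ, n ≤ 0 → w n = 0)
    (hu : Summable fun n : ℕ =>
      (kk k0 lam ((n : ℤ) + 1)) ^ (2 * (d - θ + s)) * ‖u ((n : ℤ) + 1)‖ ^ 2)
    (hv : Summable fun n : ℕ =>
      (kk k0 lam ((n : ℤ) + 1)) ^ (2 * (d - θ - s)) * ‖v ((n : ℤ) + 1)‖ ^ 2)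
    (hw : BddAbove (Set.range fun n : ℕ =>
      (kk k0 lam ((n : ℤ) + 1)) ^ (1 + 2 * θ) * ‖w ((n : ℤ) + 1)‖)) :
    ‖∑' n : ℕ, ((kk k0 lam ((n : ℤ) + 1)) ^ (2 * d) : ℝ) *
        sB2 a b k0 lam u v ((n : ℤ) + 1) * (starRingEnd ℂ) (w ((n : ℤ) + 1))‖ ≤
      (|a| * (lam ^ (1 - 3 * d + 3 * θ + s) + lam ^ (-(1 - 3 * d + 3 * θ + s)))
        + |b| * (lam ^ (2 * s) + lam ^ (-(1 - 3 * d + 3 * θ - s)))) *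
      Wsup k0 lam (1 + 2 * θ) w * AH k0 lam (d - θ + s) u * AH k0 lam (d - θ - s) v := by
  have hlam0 : (0:ℝ) < lam := lt_trans one_pos hlam
  have hkpos : ∀ m : ℤ, 0 < kk k0 lam m := kk_pos hk0 hlam0
  have hkr : ∀ (m : ℤ) (x : ℝ), 0 < kk k0 lam m ^ x :=
    fun m x => Real.rpow_pos_of_pos (hkpos m) x
  set rU := d - θ + s with hrU
  set rV := d - θ - s with hrV
  set FZ : ℤ → ℝ := fun m => kk k0 lam m ^ rU * ‖u m‖ with hFZ
  set GZ : ℤ → ℝ := fun m => kk k0 lam m ^ rV * ‖v m‖ with hGZ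
  have hFZnn : ∀ m, 0 ≤ FZ m := fun m => mul_nonneg (hkr m rU).le (norm_nonneg _)
  have hGZnn : ∀ m, 0 ≤ GZ m := fun m => mul_nonneg (hkr m rV).le (norm_nonneg _)
  have hFZ0 : ∀ m : ℤ, m ≤ 0 → FZ m = 0 := fun m hm => by simp [hFZ, hu0 m hm]
  have hGZ0 : ∀ m : ℤ, m ≤ 0 → GZ m = 0 := fun m hm => by simp [hGZ, hv0 m hm]
  set W := Wsup k0 lam (1 + 2*θ) w with hWdef
  set SF := AH k0 lam rU u with hSFdef
  set SG := AH k0 lam rV v with hSGdef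
  have hSFnn : 0 ≤ SF := Real.sqrt_nonneg _
  have hSGnn : 0 ≤ SG := Real.sqrt_nonneg _
  have hWnn : 0 ≤ W := by
    refine le_trans ?_ (le_ciSup hw 0)
    exact mul_nonneg (hkr _ _).le (norm_nonneg _)
  have hwbd : ∀ n : ℕ, ‖w ((n:ℤ)+1)‖ ≤ W * kk k0 lam ((n:ℤ)+1) ^ (-(1+2*θ)) := by
    intro n
    have hx := hkr ((n:ℤ)+1) (1+2*θ)
    calc ‖w ((n:ℤ)+1)‖
        = (kk k0 lam ((n:ℤ)+1) ^ (1+2*θ) * ‖w ((n:ℤ)+1)‖) / kk k0 lam ((n:ℤ)+1) ^ (1+2*θ) := by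
          field_simp
      _ ≤ W / kk k0 lam ((n:ℤ)+1) ^ (1+2*θ) := by
          gcongr
          exact le_ciSup hw n
      _ = W * kk k0 lam ((n:ℤ)+1) ^ (-(1+2*θ)) := by
          rw [Real.rpow_neg (hkpos _).le, div_eq_mul_inv]
  have hsq : ∀ (m : ℤ) (x : ℝ), (kk k0 lam m ^ x)^2 = kk k0 lam m ^ (2*x) := by
    intro m x
    rw [← Real.rpow_natCast (kk k0 lam m ^ x) 2, ← Real.rpow_mul (hkpos m).le]
    congr 1
    push_cast; ring
  -- base range bounds
  have hSFsq : SF ^ 2 = ∑' n : ℕ, kk k0 lam ((n:ℤ)+1) ^ (2*rU) * ‖u ((n:ℤ)+1)‖^2 := by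
    rw [hSFdef, AH, Real.sq_sqrt (tsum_nonneg fun n => mul_nonneg (hkr _ _).le (sq_nonneg _))]
  have hSGsq : SG ^ 2 = ∑' n : ℕ, kk k0 lam ((n:ℤ)+1) ^ (2*rV) * ‖v ((n:ℤ)+1)‖^2 := by
    rw [hSGdef, AH, Real.sq_sqrt (tsum_nonneg fun n => mul_nonneg (hkr _ _).le (sq_nonneg _))]
  have hFb : ∀ N, ∑ n ∈ Finset.range N, (FZ ((n:ℤ)+1))^2 ≤ SF^2 := by
    intro N
    rw [hSFsq]
    have he : ∀ n : ℕ, (FZ ((n:ℤ)+1))^2 = kk k0 lam ((n:ℤ)+1)^(2*rU) * ‖u ((n:ℤ)+1)‖^2 := by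
      intro n; rw [hFZ]; simp only [mul_pow, hsq]
    calc ∑ n ∈ Finset.range N, (FZ ((n:ℤ)+1))^2
        = ∑ n ∈ Finset.range N, kk k0 lam ((n:ℤ)+1)^(2*rU) * ‖u ((n:ℤ)+1)‖^2 :=
          Finset.sum_congr rfl fun n _ => he n
      _ ≤ _ := Summable.sum_le_tsum _ (fun i _ => mul_nonneg (hkr _ _).le (sq_nonneg _)) hu
  have hGb : ∀ N, ∑ n ∈ Finset.range N, (GZ ((n:ℤ)+1))^2 ≤ SG^2 := by
    intro N
    rw [hSGsq]
    have he : ∀ n : ℕ, (GZ ((n:ℤ)+1))^2 = kk k0 lam ((n:ℤ)+1)^(2*rV) * ‖v ((n:ℤ)+1)‖^2 := by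
      intro n; rw [hGZ]; simp only [mul_pow, hsq]
    calc ∑ n ∈ Finset.range N, (GZ ((n:ℤ)+1))^2
        = ∑ n ∈ Finset.range N, kk k0 lam ((n:ℤ)+1)^(2*rV) * ‖v ((n:ℤ)+1)‖^2 :=
          Finset.sum_congr rfl fun n _ => he n
      _ ≤ _ := Summable.sum_le_tsum _ (fun i _ => mul_nonneg (hkr _ _).le (sq_nonneg _)) hv
  -- shifted sequences
  set f1 : ℕ → ℝ := fun n => FZ ((n:ℤ)+2) with hf1
  set g1 : ℕ → ℝ := fun n => GZ ((n:ℤ)+3) with hg1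
  set f2 : ℕ → ℝ := fun n => FZ (n:ℤ) with hf2
  set g2 : ℕ → ℝ := fun n => GZ ((n:ℤ)+2) with hg2
  set g3 : ℕ → ℝ := fun n => GZ ((n:ℤ)-1) with hg3
  set f4 : ℕ → ℝ := fun n => FZ ((n:ℤ)-1) with hf4
  set g4 : ℕ → ℝ := fun n => GZ (n:ℤ) with hg4
  have hf1b : ∀ N, ∑ n ∈ Finset.range N, f1 n ^ 2 ≤ SF ^ 2 := by
    refine range_sq_le_shift hFb fun n => ?_
    rw [hf1]; push_cast; ring_nf
  have hg2b : ∀ N, ∑ n ∈ Finset.range N, g2 n ^ 2 ≤ SG ^ 2 := by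
    refine range_sq_le_shift hGb fun n => ?_
    rw [hg2]; push_cast; ring_nf
  have hg1b : ∀ N, ∑ n ∈ Finset.range N, g1 n ^ 2 ≤ SG ^ 2 := by
    refine range_sq_le_shift hg2b fun n => ?_
    rw [hg1, hg2]; push_cast; ring_nf
  have hf2b : ∀ N, ∑ n ∈ Finset.range N, f2 n ^ 2 ≤ SF ^ 2 := by
    refine range_sq_le (sq_nonneg _) hFb ?_ fun n => ?_
    · rw [hf2]; exact hFZ0 0 le_rfl
    · rw [hf2]; push_cast; ring_nf
  have hg4b : ∀ N, ∑ n ∈ Finset.range N, g4 n ^ 2 ≤ SG ^ 2 := by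
    refine range_sq_le (sq_nonneg _) hGb ?_ fun n => ?_
    · rw [hg4]; exact hGZ0 0 le_rfl
    · rw [hg4]; push_cast; ring_nf
  have hg3b : ∀ N, ∑ n ∈ Finset.range N, g3 n ^ 2 ≤ SG ^ 2 := by
    refine range_sq_le (sq_nonneg _) hg4b ?_ fun n => ?_
    · rw [hg3]; exact hGZ0 _ (by norm_num)
    · rw [hg3, hg4]; push_cast; ring_nf
  have hf4b : ∀ N, ∑ n ∈ Finset.range N, f4 n ^ 2 ≤ SF ^ 2 := by
    refine range_sq_le (sq_nonneg _) hf2b ?_ fun n => ?_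
    · rw [hf4]; exact hFZ0 _ (by norm_num)
    · rw [hf4, hf2]; push_cast; ring_nf
  obtain ⟨hs1, hb1⟩ := cs_aux (fun n => hFZnn _) (fun n => hGZnn _) hSFnn hSGnn hf1b hg1b
  obtain ⟨hs2, hb2⟩ := cs_aux (fun n => hFZnn _) (fun n => hGZnn _) hSFnn hSGnn hf2b hg2b
  obtain ⟨hs3, hb3⟩ := cs_aux (fun n => hFZnn _) (fun n => hGZnn _) hSFnn hSGnn hf2b hg3b
  obtain ⟨hs4, hb4⟩ := cs_aux (fun n => hFZnn _) (fun n => hGZnn _) hSFnn hSGnn hf4b hg4b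
  -- pointwise bound
  have hpt : ∀ n : ℕ,
      ‖((kk k0 lam ((n : ℤ) + 1)) ^ (2 * d) : ℝ) * sB2 a b k0 lam u v ((n : ℤ) + 1) *
        (starRingEnd ℂ) (w ((n : ℤ) + 1))‖ ≤
        |a| * lam ^ (1-3*d+3*θ+s) * W * (f1 n * g1 n)
        + |b| * lam ^ (2*s) * W * (f2 n * g2 n)
        + |a| * lam ^ (-(1-3*d+3*θ+s)) * W * (f2 n * g3 n)
        + |b| * lam ^ (-(1-3*d+3*θ-s)) * W * (f4 n * g4 n) := by
    intro n
    have a1 : ((n:ℤ)+1)+1 = (n:ℤ)+2 := by ring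
    have a2 : ((n:ℤ)+1)+2 = (n:ℤ)+3 := by ring
    have a3 : ((n:ℤ)+1)-1 = (n:ℤ) := by ring
    have a4 : ((n:ℤ)+1)-2 = (n:ℤ)-1 := by ring
    have habs : ∀ m : ℤ, |kk k0 lam m| = kk k0 lam m := fun m => abs_of_pos (hkpos m)
    have hB : ‖sB2 a b k0 lam u v ((n:ℤ)+1)‖ ≤
        |a| * kk k0 lam ((n:ℤ)+2) * ‖v ((n:ℤ)+3)‖ * ‖u ((n:ℤ)+2)‖
        + |b| * kk k0 lam ((n:ℤ)+1) * ‖v ((n:ℤ)+2)‖ * ‖u (n:ℤ)‖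
        + |a| * kk k0 lam (n:ℤ) * ‖u (n:ℤ)‖ * ‖v ((n:ℤ)-1)‖
        + |b| * kk k0 lam (n:ℤ) * ‖v (n:ℤ)‖ * ‖u ((n:ℤ)-1)‖ := by
      simp only [sB2]
      rw [a1, a2, a3, a4]
      set A1 := (a:ℂ) * ((kk k0 lam ((n:ℤ)+2) : ℝ) : ℂ) * v ((n:ℤ)+3) * (starRingEnd ℂ) (u ((n:ℤ)+2)) with hA1
      set A2 := (b:ℂ) * ((kk k0 lam ((n:ℤ)+1) : ℝ) : ℂ) * v ((n:ℤ)+2) * (starRingEnd ℂ) (u (n:ℤ)) with hA2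
      set A3 := (a:ℂ) * ((kk k0 lam (n:ℤ) : ℝ) : ℂ) * u (n:ℤ) * v ((n:ℤ)-1) with hA3
      set A4 := (b:ℂ) * ((kk k0 lam (n:ℤ) : ℝ) : ℂ) * v (n:ℤ) * u ((n:ℤ)-1) with hA4
      have hn : ‖-Complex.I * (A1+A2+A3+A4)‖ = ‖A1+A2+A3+A4‖ := by
        rw [norm_mul, norm_neg, Complex.norm_I, one_mul]
      rw [hn]
      have t1 := norm_add_le (A1+A2+A3) A4
      have t2 := norm_add_le (A1+A2) A3
      have t3 := norm_add_le A1 A2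
      have n1 : ‖A1‖ = |a| * kk k0 lam ((n:ℤ)+2) * ‖v ((n:ℤ)+3)‖ * ‖u ((n:ℤ)+2)‖ := by
        simp [hA1, norm_mul, Complex.norm_real, Real.norm_eq_abs, RCLike.norm_conj, habs]
      have n2 : ‖A2‖ = |b| * kk k0 lam ((n:ℤ)+1) * ‖v ((n:ℤ)+2)‖ * ‖u (n:ℤ)‖ := by
        simp [hA2, norm_mul, Complex.norm_real, Real.norm_eq_abs, RCLike.norm_conj, habs]
      have n3 : ‖A3‖ = |a| * kk k0 lam (n:ℤ) * ‖u (n:ℤ)‖ * ‖v ((n:ℤ)-1)‖ := by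
        simp [hA3, norm_mul, Complex.norm_real, Real.norm_eq_abs, RCLike.norm_conj, habs]
      have n4 : ‖A4‖ = |b| * kk k0 lam (n:ℤ) * ‖v (n:ℤ)‖ * ‖u ((n:ℤ)-1)‖ := by
        simp [hA4, norm_mul, Complex.norm_real, Real.norm_eq_abs, RCLike.norm_conj, habs]
      calc ‖A1+A2+A3+A4‖ ≤ ‖A1‖+‖A2‖+‖A3‖+‖A4‖ := by linarith
        _ = _ := by rw [n1, n2, n3, n4]
    have hnorm : ‖((kk k0 lam ((n : ℤ) + 1)) ^ (2 * d) : ℝ) * sB2 a b k0 lam u v ((n : ℤ) + 1) *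
        (starRingEnd ℂ) (w ((n : ℤ) + 1))‖
        = kk k0 lam ((n:ℤ)+1) ^ (2*d) * ‖sB2 a b k0 lam u v ((n:ℤ)+1)‖ * ‖w ((n:ℤ)+1)‖ := by
      rw [norm_mul, norm_mul, Complex.norm_real, Real.norm_eq_abs, abs_of_pos (hkr _ _),
        RCLike.norm_conj]
    have h1 : (2*d) + 1 + (-(1+2*θ)) = rU + rV := by rw [hrU, hrV]; ring
    have I1 := kk_ident hk0 hlam0 ((n:ℤ)+1) ((n:ℤ)+2) ((n:ℤ)+2) ((n:ℤ)+3) (2*d) (-(1+2*θ))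
      rU rV (1-3*d+3*θ+s) h1 (by rw [hrU, hrV]; push_cast; ring)
    have I2 := kk_ident hk0 hlam0 ((n:ℤ)+1) ((n:ℤ)+1) ((n:ℤ)) ((n:ℤ)+2) (2*d) (-(1+2*θ))
      rU rV (2*s) h1 (by rw [hrU, hrV]; push_cast; ring)
    have I3 := kk_ident hk0 hlam0 ((n:ℤ)+1) ((n:ℤ)) ((n:ℤ)) ((n:ℤ)-1) (2*d) (-(1+2*θ))
      rU rV (-(1-3*d+3*θ+s)) h1 (by rw [hrU, hrV]; push_cast; ring)
    have I4 := kk_ident hk0 hlam0 ((n:ℤ)+1) ((n:ℤ)) ((n:ℤ)-1) ((n:ℤ)) (2*d) (-(1+2*θ))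
      rU rV (-(1-3*d+3*θ-s)) h1 (by rw [hrU, hrV]; push_cast; ring)
    rw [hnorm]
    calc kk k0 lam ((n:ℤ)+1) ^ (2*d) * ‖sB2 a b k0 lam u v ((n:ℤ)+1)‖ * ‖w ((n:ℤ)+1)‖
        ≤ kk k0 lam ((n:ℤ)+1) ^ (2*d) *
          (|a| * kk k0 lam ((n:ℤ)+2) * ‖v ((n:ℤ)+3)‖ * ‖u ((n:ℤ)+2)‖
          + |b| * kk k0 lam ((n:ℤ)+1) * ‖v ((n:ℤ)+2)‖ * ‖u (n:ℤ)‖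
          + |a| * kk k0 lam (n:ℤ) * ‖u (n:ℤ)‖ * ‖v ((n:ℤ)-1)‖
          + |b| * kk k0 lam (n:ℤ) * ‖v (n:ℤ)‖ * ‖u ((n:ℤ)-1)‖) * ‖w ((n:ℤ)+1)‖ :=
          mul_le_mul_of_nonneg_right (mul_le_mul_of_nonneg_left hB (hkr _ _).le)
            (norm_nonneg _)
      _ ≤ kk k0 lam ((n:ℤ)+1) ^ (2*d) *
          (|a| * kk k0 lam ((n:ℤ)+2) * ‖v ((n:ℤ)+3)‖ * ‖u ((n:ℤ)+2)‖
          + |b| * kk k0 lam ((n:ℤ)+1) * ‖v ((n:ℤ)+2)‖ * ‖u (n:ℤ)‖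
          + |a| * kk k0 lam (n:ℤ) * ‖u (n:ℤ)‖ * ‖v ((n:ℤ)-1)‖
          + |b| * kk k0 lam (n:ℤ) * ‖v (n:ℤ)‖ * ‖u ((n:ℤ)-1)‖) *
          (W * kk k0 lam ((n:ℤ)+1) ^ (-(1+2*θ))) := by
          refine mul_le_mul_of_nonneg_left (hwbd n) ?_
          refine mul_nonneg (hkr _ _).le (le_trans (norm_nonneg _) hB)
      _ = kk k0 lam ((n:ℤ)+1) ^ (2*d) * kk k0 lam ((n:ℤ)+2) * kk k0 lam ((n:ℤ)+1) ^ (-(1+2*θ))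
            * (|a| * ‖v ((n:ℤ)+3)‖ * ‖u ((n:ℤ)+2)‖ * W)
          + kk k0 lam ((n:ℤ)+1) ^ (2*d) * kk k0 lam ((n:ℤ)+1) * kk k0 lam ((n:ℤ)+1) ^ (-(1+2*θ))
            * (|b| * ‖v ((n:ℤ)+2)‖ * ‖u (n:ℤ)‖ * W)
          + kk k0 lam ((n:ℤ)+1) ^ (2*d) * kk k0 lam ((n:ℤ)) * kk k0 lam ((n:ℤ)+1) ^ (-(1+2*θ))
            * (|a| * ‖u (n:ℤ)‖ * ‖v ((n:ℤ)-1)‖ * W)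
          + kk k0 lam ((n:ℤ)+1) ^ (2*d) * kk k0 lam ((n:ℤ)) * kk k0 lam ((n:ℤ)+1) ^ (-(1+2*θ))
            * (|b| * ‖v (n:ℤ)‖ * ‖u ((n:ℤ)-1)‖ * W) := by ring
      _ = lam ^ (1-3*d+3*θ+s) * (kk k0 lam ((n:ℤ)+2) ^ rU * kk k0 lam ((n:ℤ)+3) ^ rV)
            * (|a| * ‖v ((n:ℤ)+3)‖ * ‖u ((n:ℤ)+2)‖ * W)
          + lam ^ (2*s) * (kk k0 lam ((n:ℤ)) ^ rU * kk k0 lam ((n:ℤ)+2) ^ rV)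
            * (|b| * ‖v ((n:ℤ)+2)‖ * ‖u (n:ℤ)‖ * W)
          + lam ^ (-(1-3*d+3*θ+s)) * (kk k0 lam ((n:ℤ)) ^ rU * kk k0 lam ((n:ℤ)-1) ^ rV)
            * (|a| * ‖u (n:ℤ)‖ * ‖v ((n:ℤ)-1)‖ * W)
          + lam ^ (-(1-3*d+3*θ-s)) * (kk k0 lam ((n:ℤ)-1) ^ rU * kk k0 lam ((n:ℤ)) ^ rV)
            * (|b| * ‖v (n:ℤ)‖ * ‖u ((n:ℤ)-1)‖ * W) := by
            linear_combination (|a| * ‖v ((n:ℤ)+3)‖ * ‖u ((n:ℤ)+2)‖ * W) * I1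
              + (|b| * ‖v ((n:ℤ)+2)‖ * ‖u (n:ℤ)‖ * W) * I2
              + (|a| * ‖u (n:ℤ)‖ * ‖v ((n:ℤ)-1)‖ * W) * I3
              + (|b| * ‖v (n:ℤ)‖ * ‖u ((n:ℤ)-1)‖ * W) * I4
      _ = |a| * lam ^ (1-3*d+3*θ+s) * W * (f1 n * g1 n)
          + |b| * lam ^ (2*s) * W * (f2 n * g2 n)
          + |a| * lam ^ (-(1-3*d+3*θ+s)) * W * (f2 n * g3 n)
          + |b| * lam ^ (-(1-3*d+3*θ-s)) * W * (f4 n * g4 n) := by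
          simp only [hf1, hg1, hf2, hg2, hg3, hf4, hg4, hFZ, hGZ]
          ring
  -- assembly
  have hC1nn : 0 ≤ |a| * lam ^ (1-3*d+3*θ+s) * W :=
    mul_nonneg (mul_nonneg (abs_nonneg a) (Real.rpow_pos_of_pos hlam0 _).le) hWnn
  have hC2nn : 0 ≤ |b| * lam ^ (2*s) * W :=
    mul_nonneg (mul_nonneg (abs_nonneg b) (Real.rpow_pos_of_pos hlam0 _).le) hWnn
  have hC3nn : 0 ≤ |a| * lam ^ (-(1-3*d+3*θ+s)) * W :=
    mul_nonneg (mul_nonneg (abs_nonneg a) (Real.rpow_pos_of_pos hlam0 _).le) hWnn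
  have hC4nn : 0 ≤ |b| * lam ^ (-(1-3*d+3*θ-s)) * W :=
    mul_nonneg (mul_nonneg (abs_nonneg b) (Real.rpow_pos_of_pos hlam0 _).le) hWnn
  have hsum1 : Summable (fun n => |a| * lam ^ (1-3*d+3*θ+s) * W * (f1 n * g1 n)) :=
    hs1.mul_left _
  have hsum2 : Summable (fun n => |b| * lam ^ (2*s) * W * (f2 n * g2 n)) :=
    hs2.mul_left _
  have hsum3 : Summable (fun n => |a| * lam ^ (-(1-3*d+3*θ+s)) * W * (f2 n * g3 n)) :=
    hs3.mul_left _
  have hsum4 : Summable (fun n => |b| * lam ^ (-(1-3*d+3*θ-s)) * W * (f4 n * g4 n)) :=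
    hs4.mul_left _
  have hEsum : Summable (fun n : ℕ =>
      |a| * lam ^ (1-3*d+3*θ+s) * W * (f1 n * g1 n)
      + |b| * lam ^ (2*s) * W * (f2 n * g2 n)
      + |a| * lam ^ (-(1-3*d+3*θ+s)) * W * (f2 n * g3 n)
      + |b| * lam ^ (-(1-3*d+3*θ-s)) * W * (f4 n * g4 n)) :=
    ((hsum1.add hsum2).add hsum3).add hsum4
  have hTs : Summable (fun n : ℕ =>
      ‖((kk k0 lam ((n : ℤ) + 1)) ^ (2 * d) : ℝ) * sB2 a b k0 lam u v ((n : ℤ) + 1) *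
        (starRingEnd ℂ) (w ((n : ℤ) + 1))‖) :=
    Summable.of_nonneg_of_le (fun n => norm_nonneg _) hpt hEsum
  calc ‖∑' n : ℕ, ((kk k0 lam ((n : ℤ) + 1)) ^ (2 * d) : ℝ) *
        sB2 a b k0 lam u v ((n : ℤ) + 1) * (starRingEnd ℂ) (w ((n : ℤ) + 1))‖
      ≤ ∑' n : ℕ, ‖((kk k0 lam ((n : ℤ) + 1)) ^ (2 * d) : ℝ) *
        sB2 a b k0 lam u v ((n : ℤ) + 1) * (starRingEnd ℂ) (w ((n : ℤ) + 1))‖ :=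
        norm_tsum_le_tsum_norm hTs
    _ ≤ ∑' n : ℕ, (|a| * lam ^ (1-3*d+3*θ+s) * W * (f1 n * g1 n)
      + |b| * lam ^ (2*s) * W * (f2 n * g2 n)
      + |a| * lam ^ (-(1-3*d+3*θ+s)) * W * (f2 n * g3 n)
      + |b| * lam ^ (-(1-3*d+3*θ-s)) * W * (f4 n * g4 n)) := Summable.tsum_le_tsum hpt hTs hEsum
    _ = |a| * lam ^ (1-3*d+3*θ+s) * W * (∑' n, f1 n * g1 n)
      + |b| * lam ^ (2*s) * W * (∑' n, f2 n * g2 n)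
      + |a| * lam ^ (-(1-3*d+3*θ+s)) * W * (∑' n, f2 n * g3 n)
      + |b| * lam ^ (-(1-3*d+3*θ-s)) * W * (∑' n, f4 n * g4 n) := by
        rw [Summable.tsum_add ((hsum1.add hsum2).add hsum3) hsum4,
          Summable.tsum_add (hsum1.add hsum2) hsum3, Summable.tsum_add hsum1 hsum2,
          tsum_mul_left, tsum_mul_left, tsum_mul_left, tsum_mul_left]
    _ ≤ |a| * lam ^ (1-3*d+3*θ+s) * W * (SF * SG)
      + |b| * lam ^ (2*s) * W * (SF * SG)
      + |a| * lam ^ (-(1-3*d+3*θ+s)) * W * (SF * SG)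
      + |b| * lam ^ (-(1-3*d+3*θ-s)) * W * (SF * SG) := by
        have e1 := mul_le_mul_of_nonneg_left hb1 hC1nn
        have e2 := mul_le_mul_of_nonneg_left hb2 hC2nn
        have e3 := mul_le_mul_of_nonneg_left hb3 hC3nn
        have e4 := mul_le_mul_of_nonneg_left hb4 hC4nn
        simp only [hf1, hg1, hf2, hg2, hg3, hf4, hg4]
        linarith
    _ = (|a| * (lam ^ (1 - 3 * d + 3 * θ + s) + lam ^ (-(1 - 3 * d + 3 * θ + s)))
        + |b| * (lam ^ (2 * s) + lam ^ (-(1 - 3 * d + 3 * θ - s)))) * W * SF * SG := by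
        ring
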